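/- Let $(X,\mu)$ be a probability space, $\Gamma$ a countable group with a pmp action on $X$, and consider the groupoid ring $\mathbb{C}[X\rtimes\Gamma]$ of the transformation groupoid. The algebraic crossed product $L^\infty(X)\rtimes_{\mathrm{alg}}\Gamma$ embeds into $\mathbb{C}[X\rtimes\Gamma]$ via $\iota(\sum_\gamma f_\gamma u_\gamma)=\sum_\gamma(f_\gamma\circ r)\mathbbm{1}_{X\times\{\gamma\}}$, and this embedding has dense image with respect to the rank pseudometric $d_{L^\infty(X)}$; in particular $\iota$ is a $\dim_{L^\infty(X)}$-isomorphism. -/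

import Mathlib

open MeasureTheory Set ENNReal

/-- A probability/finite-measure preserving discrete Borel groupoid, presented over
its unit space `X` and arrow space `G`.  `s`, `r` are the source and range maps,
`unit` is the inclusion of units, `mul` the (partially defined, here totalized)
composition, `inv` the inversion.  Fibers of `s` are countable and every
one-sheeted Borel set induces a `μ`-preserving partial Borel isomorphism
(field `pmp`). -/
structure PMPGroupoid (X G : Type) [MeasurableSpace X] [MeasurableSpace G] where
  μ : Measure X
  finite : IsFiniteMeasure μ
  s : G → X
  r : G → X
  unit : X → G
  mul : G → G → G
  inv : G → G
  meas_s : Measurable s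
  meas_r : Measurable r
  meas_unit : Measurable unit
  meas_inv : Measurable inv
  s_unit : ∀ x, s (unit x) = x
  r_unit : ∀ x, r (unit x) = x
  s_mul : ∀ g h, s g = r h → s (mul g h) = s h
  r_mul : ∀ g h, s g = r h → r (mul g h) = r g
  s_inv : ∀ g, s (inv g) = r g
  r_inv : ∀ g, r (inv g) = s g
  mul_assoc' : ∀ g h k, s g = r h → s h = r k → mul (mul g h) k = mul g (mul h k)
  unit_mul : ∀ g, mul (unit (r g)) g = g
  mul_unit : ∀ g, mul g (unit (s g)) = g
  inv_mul : ∀ g, mul (inv g) g = unit (s g)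
  mul_inv : ∀ g, mul g (inv g) = unit (r g)
  countable_fibers : ∀ x, {g | s g = x}.Countable
  pmp : ∀ E : Set G, MeasurableSet E → Set.InjOn s E → Set.InjOn r E →
      ∀ A : Set X, MeasurableSet A → A ⊆ s '' E → μ (r '' (E ∩ s ⁻¹' A)) = μ A

namespace PMPGroupoid

variable {X G : Type} [MeasurableSpace X] [MeasurableSpace G] (Γ : PMPGroupoid X G)

/-- The fiberwise counting measure `μ^G(B) = ∫_X #(s⁻¹(x) ∩ B) dμ(x)`. -/
noncomputable def fiberMeasure (B : Set G) : ℝ≥0∞ :=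
  ∫⁻ x, ({g | Γ.s g = x} ∩ B).encard.toENNReal ∂Γ.μ

/-- A Borel set `E ⊆ G` is one-sheeted if `s` and `r` are injective on `E`. -/
def OneSheeted (E : Set G) : Prop :=
  MeasurableSet E ∧ Set.InjOn Γ.s E ∧ Set.InjOn Γ.r E

/-- The subgroupoid (with units from `Y`) generated by a set of arrows `A`:
the smallest set of arrows containing `A`, the units over `Y`, and closed under
inversion and (composable) multiplication.  Over `Y = univ` this is exactly
`X ∪ ⋃ {reduced words in A}`. -/
def genOn (Y : Set X) (A : Set G) : Set G :=
  ⋂₀ {S : Set G | A ⊆ S ∧ (∀ x ∈ Y, Γ.unit x ∈ S) ∧ (∀ g ∈ S, Γ.inv g ∈ S) ∧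
      ∀ g h, g ∈ S → h ∈ S → Γ.s g = Γ.r h → Γ.mul g h ∈ S}

/-- The restriction `G↾_Y = s⁻¹(Y) ∩ r⁻¹(Y)` of the groupoid to a Borel set `Y ⊆ X`. -/
def restrictSet (Y : Set X) : Set G := Γ.s ⁻¹' Y ∩ Γ.r ⁻¹' Y

/-- A graphing of the restricted groupoid `G↾_Y`: a countable family of one-sheeted
sets inside `G↾_Y` generating it up to a `μ^G`-null set. -/
def IsGraphingOn (Y : Set X) (𝓔 : ℕ → Set G) : Prop :=
  (∀ i, Γ.OneSheeted (𝓔 i) ∧ 𝓔 i ⊆ Γ.restrictSet Y) ∧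
    Γ.fiberMeasure (Γ.restrictSet Y \ Γ.genOn Y (⋃ i, 𝓔 i)) = 0

/-- The cost `C_μ(𝓔) = ∑_E μ^G(E)` of a graphing. -/
noncomputable def graphingCost (𝓔 : ℕ → Set G) : ℝ≥0∞ :=
  ∑' i, Γ.fiberMeasure (𝓔 i)

/-- The cost of the restriction `G↾_Y`. -/
noncomputable def costOn (Y : Set X) : ℝ≥0∞ :=
  ⨅ (𝓔 : ℕ → Set G) (_ : Γ.IsGraphingOn Y 𝓔), Γ.graphingCost 𝓔

/-- A graphing of `G`. -/
def IsGraphing (𝓔 : ℕ → Set G) : Prop := Γ.IsGraphingOn Set.univ 𝓔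

/-- The cost `C_μ(G)` of the groupoid: the infimum of costs of graphings. -/
noncomputable def cost : ℝ≥0∞ := Γ.costOn Set.univ

/-- A Borel subset `A ⊆ X` is `G`-invariant if `r(s⁻¹(A)) ⊆ A`. -/
def Invariant (A : Set X) : Prop := ∀ g, Γ.s g ∈ A → Γ.r g ∈ A

/-- A Borel subset `A ⊆ G` is generating if the subgroupoid it generates
(together with all units) is `μ^G`-conull. -/
def IsGeneratingSet (A : Set G) : Prop :=
  Γ.fiberMeasure (Γ.genOn Set.univ A)ᶜ = 0

/-- Inversion of a set of arrows. -/
def setInv (A : Set G) : Set G := Γ.inv '' A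

/-- Product of two sets of arrows (products of composable pairs). -/
def setMul (A B : Set G) : Set G :=
  {g | ∃ a ∈ A, ∃ b ∈ B, Γ.s a = Γ.r b ∧ g = Γ.mul a b}

/-- The signed letter `E_i^{±1}` of a family `𝓔`. -/
def letterSet (𝓔 : ℕ → Set G) (p : ℕ × Bool) : Set G :=
  if p.2 then 𝓔 p.1 else Γ.setInv (𝓔 p.1)

/-- The set of values of a word `E_{i_1}^{ε_1} ⋯ E_{i_n}^{ε_n}` in the family `𝓔`. -/
def wordProd (𝓔 : ℕ → Set G) : List (ℕ × Bool) → Set G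
  | [] => Set.range Γ.unit
  | p :: l => Γ.setMul (Γ.letterSet 𝓔 p) (wordProd 𝓔 l)

/-- A word is reduced if no letter is immediately followed by its inverse. -/
def ReducedWord (l : List (ℕ × Bool)) : Prop :=
  l.Chain' fun p q => p.1 ≠ q.1 ∨ p.2 = q.2

/-- A treeing: a countable family of one-sheeted sets such that every nonempty
reduced word meets the unit space in a `μ^G`-null set. -/
def IsTreeing (𝓔 : ℕ → Set G) : Prop :=
  (∀ i, Γ.OneSheeted (𝓔 i)) ∧
    ∀ l : List (ℕ × Bool), l ≠ [] → ReducedWord l →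
      Γ.fiberMeasure (Γ.wordProd 𝓔 l ∩ Set.range Γ.unit) = 0

/-- A groupoid is treeable if it admits a graphing which is a treeing. -/
def Treeable : Prop := ∃ 𝓔 : ℕ → Set G, Γ.IsGraphing 𝓔 ∧ Γ.IsTreeing 𝓔

/-- The rank (pseudo)norm of `f : G → ℂ` as an element of the left
`L^∞(X)`-module `ℂ[G]`: the infimal measure of a Borel set `Z ⊆ X` such that
`𝟙_Z · f = f` up to `μ^G`-null sets. -/
noncomputable def rankNorm (f : G → ℂ) : ℝ≥0∞ :=
  ⨅ (Z : Set X) (_ : MeasurableSet Z ∧ Γ.fiberMeasure {g | f g ≠ 0 ∧ Γ.r g ∉ Z} = 0), Γ.μ Z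

/-- Membership in the groupoid ring `ℂ[G]`: bounded measurable functions whose
fiberwise supports (for both `s` and `r`) have essentially bounded cardinality. -/
def MemGroupoidRing (f : G → ℂ) : Prop :=
  Measurable f ∧ (∃ C : ℝ, ∀ g, ‖f g‖ ≤ C) ∧
    ∃ N : ℕ, ∀ᵐ x ∂Γ.μ, {g | Γ.s g = x ∧ f g ≠ 0}.encard ≤ (N : ℕ∞) ∧
      {g | Γ.r g = x ∧ f g ≠ 0}.encard ≤ (N : ℕ∞)

end PMPGroupoid

open PMPGroupoid in
/-- For a pmp action of a countable group `Γgrp` on `(X,μ)` with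
transformation groupoid `X ⋊ Γgrp`, the algebraic crossed product
`L^∞(X) ⋊_alg Γgrp` embeds into the groupoid ring `ℂ[X ⋊ Γgrp]` via
`ι(∑_γ f_γ u_γ) = ∑_γ (f_γ ∘ r)·𝟙_{X×{γ}}`, i.e. `ι(F)(x,γ) = F γ x`, and this
embedding is injective with `d_{L^∞(X)}`-dense image (hence it is a
`dim_{L^∞(X)}`-isomorphism). -/
theorem crossed_product_rank_dense
    {X : Type} [MeasurableSpace X] (Γgrp : Type) [Group Γgrp] [Countable Γgrp]
    [MeasurableSpace Γgrp]
    (a : X → Γgrp → X)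
    (ha_one : ∀ x, a x 1 = x)
    (ha_mul : ∀ x g h, a (a x g) h = a x (g * h))
    (Γ : PMPGroupoid X (X × Γgrp))
    (hprob : MeasureTheory.IsProbabilityMeasure Γ.μ)
    (hs : Γ.s = fun p => a p.1 p.2)
    (hr : Γ.r = fun p => p.1)
    (hunit : Γ.unit = fun x => (x, 1))
    (hmul : ∀ p q : X × Γgrp, Γ.s p = Γ.r q → Γ.mul p q = (p.1, p.2 * q.2)) :
    Function.Injective
        (fun (F : Γgrp →₀ (X → ℂ)) => fun p : X × Γgrp => F p.2 p.1) ∧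
      ∀ φ : X × Γgrp → ℂ, Γ.MemGroupoidRing φ → ∀ ε : ℝ≥0∞, 0 < ε →
        ∃ F : Γgrp →₀ (X → ℂ), Γ.rankNorm (fun p => φ p - F p.2 p.1) < ε := by
  classical
  constructor
  · intro F G h
    ext γ x
    exact congrFun h (x, γ)
  · intro φ hφ ε hε
    obtain ⟨hmeas, -, N, hN⟩ := hφ
    set S : Γgrp → Set X := fun γ => {x | φ (x, γ) ≠ 0} with hS
    have hSmeas : ∀ γ, MeasurableSet (S γ) := by
      intro γ
      have : Measurable fun x => φ (x, γ) := hmeas.comp measurable_prodMk_right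
      exact this (MeasurableSet.compl (measurableSet_singleton 0))
    -- pointwise a.e. count bound
    have hcount : ∀ᵐ x ∂Γ.μ,
        (∑' γ : Γgrp, (S γ).indicator (fun _ => (1 : ℝ≥0∞)) x) ≤ (N : ℝ≥0∞) := by
      filter_upwards [hN] with x hx
      have hset : {g : X × Γgrp | Γ.r g = x ∧ φ g ≠ 0}
          = (fun γ => (x, γ)) '' {γ | φ (x, γ) ≠ 0} := by
        ext g
        simp only [Set.mem_setOf_eq, Set.mem_image, hr]
        constructor
        · rintro ⟨rfl, hg⟩
          exact ⟨g.2, hg, rfl⟩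
        · rintro ⟨γ, hγ, rfl⟩
          exact ⟨rfl, hγ⟩
      have hinj : Function.Injective (fun γ : Γgrp => (x, γ)) := by
        intro a b hab
        exact congrArg Prod.snd hab
      have henc : ({γ | φ (x, γ) ≠ 0} : Set Γgrp).encard ≤ (N : ℕ∞) := by
        rw [← hinj.encard_image, ← hset]
        exact hx.2
      have hfin : ({γ | φ (x, γ) ≠ 0} : Set Γgrp).Finite :=
        Set.finite_of_encard_le_coe henc
      have heq : ∀ γ, (S γ).indicator (fun _ => (1 : ℝ≥0∞)) x
          = ({γ | φ (x, γ) ≠ 0} : Set Γgrp).indicator (fun _ => (1 : ℝ≥0∞)) γ := by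
        intro γ
        by_cases hγ : φ (x, γ) ≠ 0
        · rw [Set.indicator_of_mem (show x ∈ S γ from hγ),
            Set.indicator_of_mem (show γ ∈ ({γ | φ (x, γ) ≠ 0} : Set Γgrp) from hγ)]
        · rw [Set.indicator_of_notMem (show x ∉ S γ from hγ),
            Set.indicator_of_notMem (show γ ∉ ({γ | φ (x, γ) ≠ 0} : Set Γgrp) from hγ)]
      calc (∑' γ : Γgrp, (S γ).indicator (fun _ => (1 : ℝ≥0∞)) x)
          = ∑' γ : Γgrp, ({γ | φ (x, γ) ≠ 0} : Set Γgrp).indicator (fun _ => (1 : ℝ≥0∞)) γ :=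
            tsum_congr heq
        _ = ∑' _ : ({γ | φ (x, γ) ≠ 0} : Set Γgrp), (1 : ℝ≥0∞) :=
            (tsum_subtype _ _).symm
        _ ≤ (N : ℝ≥0∞) := by
            haveI := hfin.fintype
            rw [tsum_fintype]
            have h1 : (Fintype.card ({γ | φ (x, γ) ≠ 0} : Set Γgrp) : ℕ∞)
                = ({γ | φ (x, γ) ≠ 0} : Set Γgrp).encard := by
              rw [Set.encard_eq_coe_toFinset_card, Set.toFinset_card]
            have h2 : Fintype.card ({γ | φ (x, γ) ≠ 0} : Set Γgrp) ≤ N := by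
              have := h1 ▸ henc
              exact_mod_cast this
            simp only [Finset.sum_const, nsmul_eq_mul, mul_one, Finset.card_univ]
            exact_mod_cast h2
    have hsum : ∑' γ, Γ.μ (S γ) ≤ (N : ℝ≥0∞) := by
      have h1 : ∀ γ, Γ.μ (S γ) = ∫⁻ x, (S γ).indicator (fun _ => (1 : ℝ≥0∞)) x ∂Γ.μ :=
        fun γ => (lintegral_indicator_one (hSmeas γ)).symm
      calc ∑' γ, Γ.μ (S γ)
          = ∑' γ, ∫⁻ x, (S γ).indicator (fun _ => (1 : ℝ≥0∞)) x ∂Γ.μ := tsum_congr h1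
        _ = ∫⁻ x, ∑' γ, (S γ).indicator (fun _ => (1 : ℝ≥0∞)) x ∂Γ.μ :=
            (lintegral_tsum fun γ =>
              ((measurable_const.indicator (hSmeas γ)).aemeasurable)).symm
        _ ≤ ∫⁻ _, (N : ℝ≥0∞) ∂Γ.μ := lintegral_mono_ae hcount
        _ = (N : ℝ≥0∞) := by simp [lintegral_const]
    have htop : ∑' γ, Γ.μ (S γ) ≠ ⊤ :=
      ne_top_of_le_ne_top (by simp) hsum
    obtain ⟨t, ht⟩ : ∃ t : Finset Γgrp, (∑' γ : {γ // γ ∉ t}, Γ.μ (S γ)) < ε := by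
      have := (ENNReal.tendsto_tsum_compl_atTop_zero htop).eventually (gt_mem_nhds hε)
      exact this.exists
    set F : Γgrp →₀ (X → ℂ) := Finsupp.onFinset t
      (fun γ => if γ ∈ t then (fun x => φ (x, γ)) else 0)
      (fun γ h => by by_contra hγ; simp [hγ] at h) with hF
    refine ⟨F, ?_⟩
    have hFval : ∀ p : X × Γgrp, F p.2 p.1 = if p.2 ∈ t then φ p else 0 := by
      intro p
      rw [hF, Finsupp.onFinset_apply]
      by_cases hp : p.2 ∈ t <;> simp [hp]
    set Z : Set X := ⋃ γ : {γ // γ ∉ t}, S γ with hZ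
    have hZmeas : MeasurableSet Z := MeasurableSet.iUnion fun γ => hSmeas γ
    have hZμ : Γ.μ Z < ε := lt_of_le_of_lt (measure_iUnion_le _) ht
    have hempty : {g : X × Γgrp |
        (fun p => φ p - F p.2 p.1) g ≠ 0 ∧ Γ.r g ∉ Z} = ∅ := by
      ext p
      simp only [Set.mem_setOf_eq, Set.mem_empty_iff_false, iff_false, not_and, not_not]
      intro h1
      by_cases hp : p.2 ∈ t
      · exact absurd (by rw [hFval p, if_pos hp]; simp) h1
      · have hφp : φ p ≠ 0 := by
          intro h0
          apply h1
          rw [hFval p, if_neg hp, h0, sub_zero]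
      -- `Γ.r p = p.1 ∈ Z`
        have : Γ.r p = p.1 := by rw [hr]
        rw [this]
        exact Set.mem_iUnion.2 ⟨⟨p.2, hp⟩, hφp⟩
    have hnull : Γ.fiberMeasure {g : X × Γgrp |
        (fun p => φ p - F p.2 p.1) g ≠ 0 ∧ Γ.r g ∉ Z} = 0 := by
      rw [hempty]
      simp [PMPGroupoid.fiberMeasure]
    calc Γ.rankNorm _ ≤ Γ.μ Z := iInf_le_of_le Z (iInf_le_of_le ⟨hZmeas, hnull⟩ le_rfl)
      _ < ε := hZμ
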